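/- Let C be a cartesian closed category with a terminal object, and suppose C has a generating family consisting of subterminal objects, meaning: for every object X, morphisms out of X are determined by their precompositions with morphisms from subterminal objects S → X. Then every locally determined cocone {ψ_X : X → Ψ} (a family commuting with all monomorphisms) factors uniquely through the terminal cocone {! : X → 1}: ψ_X = ψ_1 ∘ !_X for all X. -/

import Mathlib

open CategoryTheory CategoryTheory.Limits

theorem locally_determined_cocone_factors_through_terminal
    {C : Type*} [Category C] [CartesianMonoidalCategory C] [MonoidalClosed C]
    (hgen : ∀ {X Y : C} (f g : X ⟶ Y),
      (∀ (S : C), Mono (terminal.from S) → ∀ s : S ⟶ X, s ≫ f = s ≫ g) → f = g)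
    (Ψ : C) (ψ : ∀ X : C, X ⟶ Ψ)
    (hloc : ∀ {U X : C} (m : U ⟶ X), Mono m → m ≫ ψ X = ψ U) :
    ∀ X : C, ψ X = terminal.from X ≫ ψ (⊤_ C) := by
  intro X
  apply hgen
  intro S hS s
  have hsm : Mono s := by
    have : s ≫ terminal.from X = terminal.from S := Subsingleton.elim _ _
    have h2 : Mono (s ≫ terminal.from X) := by rwa [this]
    exact mono_of_mono s (terminal.from X)
  rw [hloc s hsm, ← Category.assoc, Subsingleton.elim (s ≫ terminal.from X) (terminal.from S),
    hloc (terminal.from S) hS]
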